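/- Let k ≥ 2, r ≥ 2 and n ≥ rk. Fix a set S of k−1 vertices of Ω_n, and let H be the cg r-graph whose edges are all r-element subsets R of Ω_n such that R ∩ S ≠ ∅ or R contains two distinct vertices at clockwise cyclic distance at most k−1. Then H contains no crossing k-matching M_k^r. Moreover, for fixed k and r there is a constant c > 0 such that for all n, ex_↻(n, M_k^r) ≥ (k−1) · r · C(n, r−1) − c · n^{r−2}. -/

import Mathlib

/-- `CycChain ℓ w` says that starting at `w 0` and moving clockwise around the cyclically
ordered set `Fin n` (clockwise = increasing residues), one encounters
`w 1, w 2, ..., w (ℓ-1)` in this order, i.e. `w 0 < w 1 < ... < w (ℓ-1) (< w 0)`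
in the cyclic order. -/
def CycChain {n : ℕ} (ℓ : ℕ) (w : ℕ → Fin n) : Prop :=
  ∀ i j : ℕ, i < j → j < ℓ → w i - w 0 < w j - w 0

/-- `IsCycCrossMatching r k H v` says that the distinct vertices
`v 0 < v 1 < ... < v (r*k-1)` (in the clockwise cyclic order on `Fin n`) carry a crossing
`k`-matching `M_k^r` in `H`: the `k` pairwise disjoint edges
`{v i, v (i+k), v (i+2k), ..., v (i+(r-1)k)}` for `0 ≤ i ≤ k-1` all belong to `H`. -/
def IsCycCrossMatching (r k : ℕ) {n : ℕ} (H : Finset (Finset (Fin n))) (v : ℕ → Fin n) : Prop :=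
  CycChain (r * k) v ∧
  ∀ i : ℕ, i < k → Finset.image (fun j => v (i + j * k)) (Finset.range r) ∈ H

/-- `IsOrdCrossMatching r k H v` says that the distinct vertices
`v 0 < v 1 < ... < v (r*k-1)` (in the linear order on `Fin n`) carry a crossing
`k`-matching `M_k^r` in `H`: the `k` pairwise disjoint edges
`{v i, v (i+k), v (i+2k), ..., v (i+(r-1)k)}` for `0 ≤ i ≤ k-1` all belong to `H`. -/
def IsOrdCrossMatching (r k : ℕ) {n : ℕ} (H : Finset (Finset (Fin n))) (v : ℕ → Fin n) : Prop :=
  (∀ i j : ℕ, i < j → j < r * k → v i < v j) ∧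
  ∀ i : ℕ, i < k → Finset.image (fun j => v (i + j * k)) (Finset.range r) ∈ H

/-- `exCycM n r k` is the maximum number of edges in an `n`-vertex convex geometric `r`-graph
containing no crossing `k`-matching `M_k^r`. -/
noncomputable def exCycM (n r k : ℕ) : ℕ :=
  sSup {m | ∃ H : Finset (Finset (Fin n)),
    (∀ e ∈ H, e.card = r) ∧ (¬ ∃ v : ℕ → Fin n, IsCycCrossMatching r k H v) ∧ H.card = m}

/-- `exOrdM n r k` is the maximum number of edges in an `n`-vertex ordered `r`-graph
containing no crossing `k`-matching `M_k^r`. -/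
noncomputable def exOrdM (n r k : ℕ) : ℕ :=
  sSup {m | ∃ H : Finset (Finset (Fin n)),
    (∀ e ∈ H, e.card = r) ∧ (¬ ∃ v : ℕ → Fin n, IsOrdCrossMatching r k H v) ∧ H.card = m}

/-- Let `k ≥ 2`, `r ≥ 2` and `n ≥ rk`. Fix a set `S` of `k−1` vertices of
`Fin n` and let `H` consist of all `r`-sets `R` meeting `S`, or containing two distinct
vertices at clockwise cyclic distance at most `k−1` (one reachable from the other in at most
`k−1` clockwise steps). Then `H` has no crossing `k`-matching `M_k^r`. Moreover, for fixed
`k` and `r` there is `c > 0` with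
`ex_↻(n, M_k^r) ≥ (k−1)·r·C(n, r−1) − c·n^(r−2)` for all `n`. -/
lemma strict_incr_ge {N : ℕ} {d : ℕ → ℕ}
    (h : ∀ i j : ℕ, i < j → j < N → d i < d j) (i : ℕ) :
    ∀ j : ℕ, i ≤ j → j < N → d i + (j - i) ≤ d j := by
  intro j
  induction j with
  | zero =>
    intro h1 _
    have : i = 0 := by omega
    subst this; simp
  | succ j ih =>
    intro h1 h2
    rcases Nat.eq_or_lt_of_le h1 with h3 | h3
    · subst h3; simp
    · have t1 := ih (by omega) (by omega)
      have t2 := h j (j + 1) (by omega) h2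
      omega

lemma part1 (r k : ℕ) (hk : 2 ≤ k) (hr : 2 ≤ r) (n : ℕ) (S : Finset (Fin n))
    (hS : S.card = k - 1) (H : Finset (Finset (Fin n)))
    (hH : ∀ e : Finset (Fin n), e ∈ H ↔ (e.card = r ∧ ((e ∩ S).Nonempty ∨
      ∃ u ∈ e, ∃ v ∈ e, u ≠ v ∧ ((v - u : Fin n) : ℕ) ≤ k - 1))) :
    ¬ ∃ w : ℕ → Fin n, IsCycCrossMatching r k H w := by
  classical
  rintro ⟨w, hchain, hedge⟩
  haveI : NeZero n := ⟨(w 0).pos.ne'⟩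
  have hidx : ∀ i a : ℕ, i < k → a < r → i + a * k < r * k := by
    intro i a hi ha
    have h1 : a * k ≤ (r-1) * k := Nat.mul_le_mul_right k (by omega)
    have h2 : (r-1) * k = r * k - k := by rw [Nat.sub_one_mul]
    have h3 : k ≤ r * k := Nat.le_mul_of_pos_left k (by omega)
    omega
  set d : ℕ → ℕ := fun a => ((w a - w 0 : Fin n) : ℕ) with hd
  have hd0 : d 0 = 0 := by simp [hd, sub_self]
  have hdlt : ∀ i j : ℕ, i < j → j < r * k → d i < d j := by
    intro i j h1 h2
    exact hchain i j h1 h2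
  have hmono := strict_incr_ge (N := r * k) hdlt
  have hwinj : ∀ a b : ℕ, a < r * k → b < r * k → w a = w b → a = b := by
    intro a b ha hb hab
    by_contra hne
    rcases Nat.lt_or_ge a b with h | h
    · have hlt := hdlt a b h hb
      simp only [hd, hab] at hlt
      omega
    · have hlt := hdlt b a (by omega) ha
      simp only [hd, hab] at hlt
      omega
  set E : ℕ → Finset (Fin n) := fun i => Finset.image (fun j => w (i + j * k)) (Finset.range r)
    with hE
  -- some edge misses S
  have hex : ∃ i, i < k ∧ (E i ∩ S) = ∅ := by
    by_contra hall
    push_neg at hall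
    have hne : ∀ i ∈ Finset.range k, (E i ∩ S).Nonempty := by
      intro i hi
      rw [Finset.mem_range] at hi
      exact hall i hi
    set f : ℕ → Fin n := fun i => if h : i ∈ Finset.range k then (hne i h).choose else w 0
      with hf
    have hmaps : ∀ i ∈ Finset.range k, f i ∈ S := by
      intro i hi
      simp only [hf, dif_pos hi]
      exact (Finset.mem_inter.mp (hne i hi).choose_spec).2
    have hcard : S.card < (Finset.range k).card := by
      rw [hS, Finset.card_range]; omega
    obtain ⟨x, hx, y, hy, hxy, hfxy⟩ :=
      Finset.exists_ne_map_eq_of_card_lt_of_maps_to hcard hmaps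
    have hfx : f x ∈ E x := by
      simp only [hf, dif_pos hx]
      exact (Finset.mem_inter.mp (hne x hx).choose_spec).1
    have hfy : f y ∈ E y := by
      simp only [hf, dif_pos hy]
      exact (Finset.mem_inter.mp (hne y hy).choose_spec).1
    rw [Finset.mem_range] at hx hy
    simp only [hE, Finset.mem_image, Finset.mem_range] at hfx hfy
    obtain ⟨a, ha, hwa⟩ := hfx
    obtain ⟨b, hb, hwb⟩ := hfy
    have heq : w (x + a * k) = w (y + b * k) := by rw [hwa, hwb, hfxy]
    have hidx2 := hwinj _ _ (hidx x a hx ha) (hidx y b hy hb) heq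
    apply hxy
    have h1 := congrArg (· % k) hidx2
    simpa [Nat.add_mul_mod_self_right, Nat.mod_eq_of_lt hx, Nat.mod_eq_of_lt hy] using h1
  obtain ⟨i0, hi0, hiS⟩ := hex
  have hEi0 := (hH (E i0)).mp (hedge i0 hi0)
  rcases hEi0.2 with hne | ⟨u, hu, v, hv, huv, hle⟩
  · rw [hiS] at hne
    exact Finset.not_nonempty_empty hne
  · simp only [hE, Finset.mem_image, Finset.mem_range] at hu hv
    obtain ⟨a, ha, hwa⟩ := hu
    obtain ⟨b, hb, hwb⟩ := hv
    have hab : a ≠ b := by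
      rintro rfl
      exact huv (hwa ▸ hwb ▸ rfl)
    set α := i0 + a * k with hα
    set β := i0 + b * k with hβ
    have hαlt : α < r * k := hidx i0 a hi0 ha
    have hβlt : β < r * k := hidx i0 b hi0 hb
    have hsub : (v - u : Fin n) = (w β - w 0) - (w α - w 0) := by
      rw [← hwa, ← hwb]
      exact (sub_sub_sub_cancel_right _ _ _).symm
    have hkpos : 0 < k := by omega
    rcases Nat.lt_or_ge a b with hlt | hge
    · -- α < β, forward distance ≥ k
      have hαβ : α < β := by
        have := (Nat.mul_lt_mul_right hkpos).mpr hlt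
        omega
      have hdαβ : d α < d β := hdlt α β hαβ hβlt
      have hfle : (w α - w 0 : Fin n) ≤ (w β - w 0 : Fin n) := by
        rw [Fin.le_def]; exact Nat.le_of_lt hdαβ
      have hval : ((v - u : Fin n) : ℕ) = d β - d α := by
        rw [hsub, Fin.coe_sub_iff_le.mpr hfle]
      have hchain2 := hmono α β (by omega) hβlt
      have hgapk : α + k ≤ β := by
        have := Nat.mul_le_mul_right k (show a + 1 ≤ b by omega)
        have h5 : (a+1)*k = a*k + k := by ring
        omega
      omega
    · -- β < α, wrap-around distance ≥ k
      have hba : b < a := by omega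
      have hβα : β < α := by
        have := (Nat.mul_lt_mul_right hkpos).mpr hba
        omega
      have hdβα : d β < d α := hdlt β α hβα hαlt
      have hval : ((v - u : Fin n) : ℕ) = n - d α + d β := by
        rw [hsub, Fin.coe_sub]
        have h1 : d α < n := (w α - w 0 : Fin n).isLt
        have h2 : (n - d α + d β) < n := by omega
        rw [Nat.mod_eq_of_lt h2]
      have h1 : d α < n := (w α - w 0 : Fin n).isLt
      have hDα := hmono α (r * k - 1) (by omega) (by omega)
      have hDlt : d (r * k - 1) < n := (w (r*k-1) - w 0 : Fin n).isLt
      have hβd := hmono 0 β (by omega) hβlt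
      have hδ : α - β = (a - b) * k := by
        rw [Nat.sub_mul]; omega
      have hδle : (a - b) * k ≤ (r-1) * k := Nat.mul_le_mul_right k (by omega)
      have hr1k : (r-1) * k = r * k - k := by rw [Nat.sub_one_mul]
      have hkle : k ≤ r * k := Nat.le_mul_of_pos_left k (by omega)
      omega

lemma chooseL1 (a j : ℕ) : ∀ b : ℕ, a.choose (j+1) + b * a.choose j ≤ (a+b).choose (j+1) := by
  intro b
  induction b with
  | zero => simp
  | succ b ih =>
    have h1 : (a+(b+1)).choose (j+1) = (a+b).choose j + (a+b).choose (j+1) := by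
      rw [show a+(b+1) = (a+b)+1 by omega]
      exact Nat.choose_succ_succ (a+b) j
    have h2 : a.choose j ≤ (a+b).choose j := Nat.choose_le_choose j (by omega)
    have h3 : (b+1) * a.choose j = b * a.choose j + a.choose j := by ring
    omega

lemma chooseL2 (a j : ℕ) : ∀ b : ℕ, (a+b).choose (j+1) ≤ a.choose (j+1) + b * (a+b).choose j := by
  intro b
  induction b with
  | zero => simp
  | succ b ih =>
    have h1 : (a+(b+1)).choose (j+1) = (a+b).choose j + (a+b).choose (j+1) := by
      rw [show a+(b+1) = (a+b)+1 by omega]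
      exact Nat.choose_succ_succ (a+b) j
    have h2 : (a+b).choose j ≤ (a+(b+1)).choose j := Nat.choose_le_choose j (by omega)
    have h3 : b * (a+b).choose j ≤ b * (a+(b+1)).choose j := Nat.mul_le_mul_left b h2
    have h4 : (b+1) * (a+(b+1)).choose j = b * (a+(b+1)).choose j + (a+(b+1)).choose j := by ring
    omega


lemma chain_ge {r k : ℕ} {F : ℕ → ℕ}
    (h : ∀ j : ℕ, j + 1 < r → F j + k ≤ F (j+1)) :
    ∀ j1 j2 : ℕ, j1 ≤ j2 → j2 < r → F j1 + k * (j2 - j1) ≤ F j2 := by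
  intro j1 j2
  induction j2 with
  | zero =>
    intro h1 _
    have : j1 = 0 := by omega
    subst this; simp
  | succ j ih =>
    intro h1 h2
    rcases Nat.eq_or_lt_of_le h1 with h3 | h3
    · subst h3; simp
    · have t1 := ih (by omega) (by omega)
      have t2 := h j h2
      have t3 : k * (j + 1 - j1) = k * (j - j1) + k := by
        rw [show j + 1 - j1 = (j - j1) + 1 by omega, Nat.mul_succ]
      omega

lemma inj_count (n r k : ℕ) (hk : 2 ≤ k) (hr : 2 ≤ r) (hn : r * k ≤ n)
    (D : Finset (Finset (Fin n)))
    (hD : ∀ R ∈ D, R.card = r ∧ (∀ v ∈ R, (k-1) ≤ (v : ℕ)) ∧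
      (∀ u ∈ R, ∀ v ∈ R, u < v → (u : ℕ) + k ≤ (v : ℕ))) :
    D.card ≤ (n - r * (k-1)).choose r := by
  classical
  have hrk : r * k = r * (k-1) + r := by
    conv_lhs => rw [show k = (k-1)+1 by omega]
    exact Nat.mul_succ r (k-1)
  -- the compression map
  set Ψ : Finset (Fin n) → Finset ℕ := fun R =>
    if h : R.card = r then
      Finset.image (fun i : Fin r => ((R.orderEmbOfFin h i : Fin n) : ℕ) - (k-1) * (i.1+1))
        Finset.univ
    else ∅ with hΨ
  -- per-set facts
  have main : ∀ (R : Finset (Fin n)) (h : R.card = r), (∀ v ∈ R, (k-1) ≤ (v : ℕ)) →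
      (∀ u ∈ R, ∀ v ∈ R, u < v → (u : ℕ) + k ≤ (v : ℕ)) →
      (StrictMono (fun i : Fin r => ((R.orderEmbOfFin h i : Fin n) : ℕ) - (k-1) * (i.1+1))) ∧
      (∀ i : Fin r, ((R.orderEmbOfFin h i : Fin n) : ℕ) - (k-1) * (i.1+1) < n - r * (k-1)) ∧
      (∀ i : Fin r, (k-1) * (i.1+1) + i.1 ≤ ((R.orderEmbOfFin h i : Fin n) : ℕ)) := by
    intro R h hlow hgap
    set f := R.orderEmbOfFin h with hf
    have hfmem : ∀ i : Fin r, f i ∈ R := fun i => Finset.orderEmbOfFin_mem R h i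
    have hfmono : StrictMono f := (R.orderEmbOfFin h).strictMono
    set F : ℕ → ℕ := fun j => if hj : j < r then ((f ⟨j, hj⟩ : Fin n) : ℕ) else 0 with hF
    have hFval : ∀ i : Fin r, F i.1 = ((f i : Fin n) : ℕ) := by
      intro i; simp only [hF, dif_pos i.2]
    have hstep : ∀ j : ℕ, j + 1 < r → F j + k ≤ F (j+1) := by
      intro j hj
      have h1 : (⟨j, by omega⟩ : Fin r) < ⟨j+1, hj⟩ := by simp [Fin.lt_def]
      have h2 := hgap _ (hfmem ⟨j, by omega⟩) _ (hfmem ⟨j+1, hj⟩) (hfmono h1)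
      simp only [hF, dif_pos hj, dif_pos (show j < r by omega)]
      exact h2
    have hchain := chain_ge hstep
    have hF0 : (k-1) ≤ F 0 := by
      have := hlow _ (hfmem ⟨0, by omega⟩)
      simp only [hF, dif_pos (show 0 < r by omega)]
      exact this
    have hFlow : ∀ j : ℕ, j < r → (k-1) + k * j ≤ F j := by
      intro j hj
      have hc := hchain 0 j (by omega) hj
      simp only [Nat.sub_zero] at hc
      omega
    have hFhigh : ∀ j : ℕ, j < r → F j + k * (r - 1 - j) < n := by
      intro j hj
      have h1 := hchain j (r-1) (by omega) (by omega)
      have h2 : F (r-1) < n := by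
        simp only [hF, dif_pos (show r - 1 < r by omega)]
        exact (f ⟨r-1, by omega⟩).isLt
      omega
    have hexact : ∀ i : Fin r, (k-1) * (i.1+1) + i.1 ≤ F i.1 := by
      intro i
      have h1 := hFlow i.1 i.2
      obtain ⟨s, hs⟩ : ∃ s, k = s + 1 := ⟨k-1, by omega⟩
      have hks : k - 1 = s := by omega
      have h2 : (k-1) + k * i.1 = (k-1) * (i.1+1) + i.1 := by
        rw [hks, hs]; ring
      omega
    refine ⟨?_, ?_, ?_⟩
    · intro i j hij
      simp only
      rw [← hFval i, ← hFval j]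
      have h1 := hchain i.1 j.1 (le_of_lt hij) j.2
      have h2 := hexact i
      obtain ⟨s, hs⟩ : ∃ s, k = s + 1 := ⟨k-1, by omega⟩
      have hks : k - 1 = s := by omega
      have h3 : k * (j.1 - i.1) + (k-1) * (i.1+1) = (k-1) * (j.1+1) + (j.1 - i.1) := by
        obtain ⟨e, he⟩ : ∃ e, j.1 = i.1 + e := ⟨j.1 - i.1, by omega⟩
        rw [he, Nat.add_sub_cancel_left, hks, hs]
        ring
      have h4 : (1:ℕ) ≤ j.1 - i.1 := by have : i.1 < j.1 := hij; omega
      omega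
    · intro i
      have h1 := hFhigh i.1 i.2
      have h2 := hexact i
      obtain ⟨s, hs⟩ : ∃ s, k = s + 1 := ⟨k-1, by omega⟩
      have hks : k - 1 = s := by omega
      obtain ⟨t, ht⟩ : ∃ t, r = i.1 + 1 + t := ⟨r - 1 - i.1, by omega⟩
      have h3 : k * (r - 1 - i.1) + (k-1) * (i.1+1) = (i.1 + 1 + t) * (k-1) + (r - 1 - i.1) := by
        rw [show r - 1 - i.1 = t by omega, hks, hs]
        ring
      have h4 : r * (k-1) = (i.1 + 1 + t) * (k-1) := by rw [← ht]
      rw [← hFval i]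
      omega
    · intro i; rw [← hFval i]; exact hexact i
  -- injectivity and range
  have hmaps : ∀ R ∈ D, Ψ R ∈ Finset.powersetCard r (Finset.range (n - r * (k-1))) := by
    intro R hR
    obtain ⟨h, hlow, hgap⟩ := hD R hR
    obtain ⟨hmono, hbound, _⟩ := main R h hlow hgap
    rw [Finset.mem_powersetCard]
    constructor
    · intro x hx
      simp only [hΨ, dif_pos h, Finset.mem_image] at hx
      obtain ⟨i, _, rfl⟩ := hx
      exact Finset.mem_range.mpr (hbound i)
    · simp only [hΨ, dif_pos h]
      rw [Finset.card_image_of_injective _ hmono.injective, Finset.card_univ, Fintype.card_fin]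
  have hinj : Set.InjOn Ψ D := by
    intro R1 hR1 R2 hR2 heq
    obtain ⟨h1, hlow1, hgap1⟩ := hD R1 hR1
    obtain ⟨h2, hlow2, hgap2⟩ := hD R2 hR2
    obtain ⟨hmono1, _, hex1⟩ := main R1 h1 hlow1 hgap1
    obtain ⟨hmono2, _, hex2⟩ := main R2 h2 hlow2 hgap2
    set g1 : Fin r → ℕ := fun i => ((R1.orderEmbOfFin h1 i : Fin n) : ℕ) - (k-1) * (i.1+1)
      with hg1
    set g2 : Fin r → ℕ := fun i => ((R2.orderEmbOfFin h2 i : Fin n) : ℕ) - (k-1) * (i.1+1)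
      with hg2
    have hΨ1 : Ψ R1 = Finset.image g1 Finset.univ := by simp only [hΨ, dif_pos h1]; rfl
    have hΨ2 : Ψ R2 = Finset.image g2 Finset.univ := by simp only [hΨ, dif_pos h2]; rfl
    have hTcard : (Finset.image g1 Finset.univ).card = r := by
      rw [Finset.card_image_of_injective _ hmono1.injective, Finset.card_univ,
        Fintype.card_fin]
    have hTT : Finset.image g1 Finset.univ = Finset.image g2 Finset.univ := by
      rw [← hΨ1, heq, hΨ2]
    have he1 := Finset.orderEmbOfFin_unique hTcard (f := g1)
      (fun i => Finset.mem_image_of_mem _ (Finset.mem_univ i)) hmono1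
    have he2 := Finset.orderEmbOfFin_unique hTcard (f := g2)
      (fun i => by rw [hTT]; exact Finset.mem_image_of_mem _ (Finset.mem_univ i)) hmono2
    have hfeq : ∀ i : Fin r, R1.orderEmbOfFin h1 i = R2.orderEmbOfFin h2 i := by
      intro i
      have e1 : g1 i = g2 i := congrFun (he1.trans he2.symm) i
      have e3 := hex1 i
      have e4 := hex2 i
      have : ((R1.orderEmbOfFin h1 i : Fin n) : ℕ) = ((R2.orderEmbOfFin h2 i : Fin n) : ℕ) := by
        simp only [hg1, hg2] at e1
        omega
      exact Fin.ext this
    -- recover the sets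
    have himg : ∀ (R : Finset (Fin n)) (h : R.card = r),
        R = Finset.image (fun i => R.orderEmbOfFin h i) Finset.univ := by
      intro R h
      ext x
      simp only [Finset.mem_image, Finset.mem_univ, true_and]
      constructor
      · intro hx
        have : x ∈ Set.range (R.orderEmbOfFin h) := by
          rw [Finset.range_orderEmbOfFin]
          exact hx
        obtain ⟨i, hi⟩ := this
        exact ⟨i, hi⟩
      · rintro ⟨i, rfl⟩
        exact Finset.orderEmbOfFin_mem R h i
    rw [himg R1 h1, himg R2 h2]
    exact Finset.image_congr (fun i _ => hfeq i)
  have := Finset.card_le_card_of_injOn Ψ hmaps hinj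
  rwa [Finset.card_powersetCard, Finset.card_range] at this

lemma le_exCycM (n r k : ℕ) (H : Finset (Finset (Fin n)))
    (h1 : ∀ e ∈ H, e.card = r) (h2 : ¬ ∃ v : ℕ → Fin n, IsCycCrossMatching r k H v) :
    H.card ≤ exCycM n r k := by
  apply le_csSup
  · refine ⟨Fintype.card (Finset (Fin n)), ?_⟩
    rintro m ⟨H', _, _, rfl⟩
    exact Finset.card_le_univ H'
  · exact ⟨H, h1, h2, rfl⟩


theorem stmt18 (r k : ℕ) (hk : 2 ≤ k) (hr : 2 ≤ r) :
    (∀ n : ℕ, r * k ≤ n → ∀ S : Finset (Fin n), S.card = k - 1 →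
      ∀ H : Finset (Finset (Fin n)),
      (∀ e : Finset (Fin n), e ∈ H ↔ (e.card = r ∧ ((e ∩ S).Nonempty ∨
        ∃ u ∈ e, ∃ v ∈ e, u ≠ v ∧ ((v - u : Fin n) : ℕ) ≤ k - 1))) →
      ¬ ∃ w : ℕ → Fin n, IsCycCrossMatching r k H w) ∧
    (∃ c : ℝ, 0 < c ∧ ∀ n : ℕ,
      ((k : ℝ) - 1) * (r : ℝ) * (n.choose (r - 1) : ℝ) - c * (n : ℝ) ^ (r - 2) ≤
        (exCycM n r k : ℝ)) := by
  classical
  constructor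
  · intro n _ S hS H hH
    exact part1 r k hk hr n S hS H hH
  · set cN : ℕ := (r*(k-1))*(r*(k-1)) + (r*(k-1))*(r*k) + 1 with hcN
    refine ⟨(cN : ℝ), by exact_mod_cast Nat.succ_pos _, ?_⟩
    have master : ∀ n : ℕ, (k-1) * r * (n.choose (r-1)) ≤ exCycM n r k + cN * n^(r-2) := by
      intro n
      rcases Nat.lt_or_ge n (r*k) with hlt | hn
      · -- small n : trivial bound
        have h1 : n.choose (r-1) ≤ n^(r-1) := Nat.choose_le_pow n (r-1)
        have h2 : n^(r-1) = n^(r-2) * n := by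
          rw [show r-1 = (r-2)+1 by omega, pow_succ]
        have h3 : (k-1)*r*(n.choose (r-1)) ≤ (k-1)*r*(n^(r-2)*n) :=
          Nat.mul_le_mul_left _ (by rw [← h2]; exact h1)
        have h4 : (k-1)*r*(n^(r-2)*n) ≤ (k-1)*r*(n^(r-2)*(r*k)) :=
          Nat.mul_le_mul_left _ (Nat.mul_le_mul_left _ (le_of_lt hlt))
        have h5 : (k-1)*r*(n^(r-2)*(r*k)) = ((r*(k-1))*(r*k))*n^(r-2) := by ring
        have h6 : ((r*(k-1))*(r*k))*n^(r-2) ≤ cN * n^(r-2) :=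
          Nat.mul_le_mul_right _ (by omega)
        omega
      · -- large n : the construction
        have hkrk : k ≤ r * k := Nat.le_mul_of_pos_left k (by omega)
        have hkn : k - 1 ≤ n := by omega
        set S : Finset (Fin n) := Finset.map (Fin.castLEEmb hkn) Finset.univ with hSdef
        have hScard : S.card = k - 1 := by
          rw [hSdef, Finset.card_map, Finset.card_univ, Fintype.card_fin]
        have hSmem : ∀ v : Fin n, v ∈ S ↔ (v : ℕ) < k - 1 := by
          intro v
          rw [hSdef]
          simp only [Finset.mem_map, Finset.mem_univ, true_and]
          constructor
          · rintro ⟨a, rfl⟩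
            exact a.2
          · intro h
            exact ⟨⟨v.1, h⟩, by ext; simp [Fin.castLEEmb]⟩
        set P : Finset (Fin n) → Prop := fun e => (e ∩ S).Nonempty ∨
          ∃ u ∈ e, ∃ v ∈ e, u ≠ v ∧ ((v - u : Fin n) : ℕ) ≤ k - 1 with hP
        set H : Finset (Finset (Fin n)) :=
          (Finset.powersetCard r Finset.univ).filter P with hHdef
        set D : Finset (Finset (Fin n)) :=
          (Finset.powersetCard r Finset.univ).filter (fun e => ¬ P e) with hDdef
        have hHiff : ∀ e : Finset (Fin n), e ∈ H ↔ (e.card = r ∧ P e) := by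
          intro e
          rw [hHdef, Finset.mem_filter, Finset.mem_powersetCard_univ]
        have hHr : ∀ e ∈ H, e.card = r := fun e he => ((hHiff e).mp he).1
        have hnomatch : ¬ ∃ w : ℕ → Fin n, IsCycCrossMatching r k H w :=
          part1 r k hk hr n S hScard H (by intro e; rw [hHiff e])
        have hHle : H.card ≤ exCycM n r k := le_exCycM n r k H hHr hnomatch
        have hsum : H.card + D.card = n.choose r := by
          rw [hHdef, hDdef]
          rw [Finset.card_filter_add_card_filter_not (p := P),
            Finset.card_powersetCard, Finset.card_univ, Fintype.card_fin]
        have hDfacts : ∀ R ∈ D, R.card = r ∧ (∀ v ∈ R, (k-1) ≤ (v : ℕ)) ∧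
            (∀ u ∈ R, ∀ v ∈ R, u < v → (u : ℕ) + k ≤ (v : ℕ)) := by
          intro R hR
          rw [hDdef, Finset.mem_filter, Finset.mem_powersetCard_univ] at hR
          obtain ⟨hcard, hnP⟩ := hR
          simp only [hP] at hnP
          push_neg at hnP
          obtain ⟨hnS, hgap⟩ := hnP
          refine ⟨hcard, ?_, ?_⟩
          · intro v hv
            by_contra hc
            push_neg at hc
            exact Finset.nonempty_iff_ne_empty.mp ⟨v, Finset.mem_inter.mpr ⟨hv, (hSmem v).mpr hc⟩⟩ hnS
          · intro u hu v hv huv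
            have h1 := hgap u hu v hv (ne_of_lt huv)
            have h2 : ((v - u : Fin n) : ℕ) = v.1 - u.1 :=
              Fin.coe_sub_iff_le.mpr (le_of_lt huv)
            have h3 : u.1 < v.1 := huv
            omega
        have hD2 : D.card ≤ (n - r*(k-1)).choose r := inj_count n r k hk hr hn D hDfacts
        have hrk2 : r * k = r * (k-1) + r := by
          conv_lhs => rw [show k = (k-1)+1 by omega]
          exact Nat.mul_succ r (k-1)
        have hmn : r*(k-1) + r ≤ n := by omega
        have e2 : n - r*(k-1) + r*(k-1) = n := by omega
        have L1 := chooseL1 (n - r*(k-1)) (r-1) (r*(k-1))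
        rw [e2, show r-1+1 = r by omega] at L1
        have L2 := chooseL2 (n - r*(k-1)) (r-2) (r*(k-1))
        rw [e2, show r-2+1 = r-1 by omega] at L2
        have hHcard : r*(k-1) * ((n - r*(k-1)).choose (r-1)) ≤ H.card := by omega
        have m1 : r*(k-1) * n.choose (r-1) ≤
            r*(k-1) * ((n-r*(k-1)).choose (r-1)) + r*(k-1) * ((r*(k-1)) * n.choose (r-2)) := by
          have := Nat.mul_le_mul_left (r*(k-1)) L2
          rw [Nat.mul_add] at this
          exact this
        have m2 : n.choose (r-2) ≤ n^(r-2) := Nat.choose_le_pow n (r-2)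
        have m3 : r*(k-1) * ((r*(k-1)) * n.choose (r-2)) ≤ (r*(k-1)*(r*(k-1))) * n^(r-2) := by
          rw [← Nat.mul_assoc]
          exact Nat.mul_le_mul_left _ m2
        have hcomm : (k-1)*r*(n.choose (r-1)) = r*(k-1)*(n.choose (r-1)) := by ring
        have hcNsplit : cN * n^(r-2) =
            (r*(k-1)*(r*(k-1)))*n^(r-2) + ((r*(k-1))*(r*k))*n^(r-2) + n^(r-2) := by
          rw [hcN]; ring
        omega
    intro n
    have h1k : (1:ℕ) ≤ k := by omega
    rw [sub_le_iff_le_add, show ((k:ℝ) - 1) = ((k-1 : ℕ) : ℝ) by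
      rw [Nat.cast_sub h1k, Nat.cast_one]]
    exact_mod_cast master n
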